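/- Consider synchronous federated inference where agent m is intervened upon and its intermediate belief is fixed at a pmf μ_m: for i ≥ 1, μ̃_i(θ) ∝ μ_m(θ)^{π_m} ∏_{k≠m} ( f_k(ξ_{k,i}|θ) μ̃_{i-1}(θ) / ∑_{θ'} f_k(ξ_{k,i}|θ') μ̃_{i-1}(θ') )^{π_k} (normalized over θ). Then for every θ ≠ θ°, the expected log-belief ratio λ̃_i(θ) = E[ log( μ̃_i(θ°)/μ̃_i(θ) ) ] converges as i → ∞ to λ̃_∞(θ) = (1/π_m) ∑_{k≠m} π_k d_k(θ) + log( μ_m(θ°)/μ_m(θ) ). Consequently the causal impact of agent m equals C_m = 1 − 1 / ( 1 + ∑_{θ≠θ°} ( μ_m(θ)/μ_m(θ°) ) · exp( −(1/π_m) ∑_{k≠m} π_k d_k(θ) ) ). -/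

import Mathlib

open MeasureTheory ProbabilityTheory Filter Finset
open scoped NNReal ENNReal

/-- **Theorem 2 (synchronous collaboration under an intervention).**
Agent `m`'s intermediate belief is fixed at a pmf `μm`, while the remaining agents
perform Bayesian adaptation on i.i.d. observations drawn from their true likelihoods, and
the fusion center combines `μ̃_i(θ) ∝ μm(θ)^{π_m} ∏_{k≠m} ψ̃_{k,i}(θ)^{π_k}`.  Then for
every wrong hypothesis `θ ≠ θ°` the expected log-belief ratio
`λ̃_i(θ) = E[log(μ̃_i(θ°)/μ̃_i(θ))]` converges to
`λ̃_∞(θ) = (1/π_m) ∑_{k≠m} π_k d_k(θ) + log(μm(θ°)/μm(θ))`, and consequently the causal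
impact `C_m = 1 − 1/(1 + ∑_{θ≠θ°} exp(−λ̃_∞(θ)))` equals
`1 − 1/(1 + ∑_{θ≠θ°} (μm(θ)/μm(θ°)) exp(−(1/π_m) ∑_{k≠m} π_k d_k(θ)))`. -/
theorem synchronous_intervention_causal_impact
    {K : ℕ} (hK : 2 ≤ K)
    {Θ : Type*} [Fintype Θ] [DecidableEq Θ] [Nonempty Θ] (θ₀ : Θ)
    (π : Fin K → ℝ) (hπ : ∀ k, π k ∈ Set.Ioo (0 : ℝ) 1) (hπsum : ∑ k, π k = 1)
    (m : Fin K)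
    {X : Fin K → Type*} [∀ k, MeasurableSpace (X k)]
    (ν : ∀ k, Measure (X k)) (hν : ∀ k, SigmaFinite (ν k))
    (f : ∀ k, Θ → X k → ℝ)
    (hfpos : ∀ k θ x, 0 < f k θ x)
    (hfmeas : ∀ k θ, Measurable (f k θ))
    (hfprob : ∀ k θ, ∫ x, f k θ x ∂ν k = 1)
    (d : Fin K → Θ → ℝ)
    (hdint : ∀ k θ, Integrable (fun x => f k θ₀ x * Real.log (f k θ₀ x / f k θ x)) (ν k))
    (hd : ∀ k θ, d k θ = ∫ x, f k θ₀ x * Real.log (f k θ₀ x / f k θ x) ∂ν k)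
    {Ω : Type*} [MeasureSpace Ω] [IsProbabilityMeasure (ℙ : Measure Ω)]
    (ξ : ∀ k : Fin K, ℕ → Ω → X k)
    (hξmeas : ∀ k i, Measurable (ξ k i))
    (hξindep : ∀ k, k ≠ m → iIndepFun (ξ k) ℙ)
    (hξlaw : ∀ k, k ≠ m → ∀ i, Measure.map (ξ k i) ℙ =
      (ν k).withDensity (fun x => ENNReal.ofReal (f k θ₀ x)))
    (hllrint : ∀ k, k ≠ m → ∀ (i : ℕ) (θ : Θ),
      Integrable (fun ω => Real.log (f k θ₀ (ξ k i ω) / f k θ (ξ k i ω))) ℙ)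
    (μm : Θ → ℝ) (hμmpos : ∀ θ, 0 < μm θ) (hμmsum : ∑ θ, μm θ = 1)
    (μ₀ : Θ → ℝ) (hμ₀pos : ∀ θ, 0 < μ₀ θ) (hμ₀sum : ∑ θ, μ₀ θ = 1)
    (μt : ℕ → Ω → Θ → ℝ)
    (hinit : ∀ ω, μt 0 ω = μ₀)
    (hμt : ∀ (i : ℕ) (ω : Ω) (θ : Θ), μt (i + 1) ω θ =
      (μm θ ^ π m * ∏ k ∈ univ.erase m,
          (f k θ (ξ k (i + 1) ω) * μt i ω θ /
            ∑ θ', f k θ' (ξ k (i + 1) ω) * μt i ω θ') ^ π k) /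
        ∑ θ'', μm θ'' ^ π m * ∏ k ∈ univ.erase m,
          (f k θ'' (ξ k (i + 1) ω) * μt i ω θ'' /
            ∑ θ', f k θ' (ξ k (i + 1) ω) * μt i ω θ') ^ π k) :
    (∀ θ, θ ≠ θ₀ →
      Tendsto (fun i => ∫ ω, Real.log (μt i ω θ₀ / μt i ω θ) ∂ℙ) atTop
        (nhds ((1 / π m) * ∑ k ∈ univ.erase m, π k * d k θ +
          Real.log (μm θ₀ / μm θ)))) ∧
    1 - 1 / (1 + ∑ θ ∈ univ.erase θ₀,
        Real.exp (-((1 / π m) * ∑ k ∈ univ.erase m, π k * d k θ +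
          Real.log (μm θ₀ / μm θ)))) =
      1 - 1 / (1 + ∑ θ ∈ univ.erase θ₀, (μm θ / μm θ₀) *
        Real.exp (-(1 / π m) * ∑ k ∈ univ.erase m, π k * d k θ)) := by

  -- positivity of beliefs
  have hpos : ∀ (i : ℕ) (ω : Ω) (θ' : Θ), 0 < μt i ω θ' := by
    intro i
    induction i with
    | zero => intro ω θ'; rw [hinit]; exact hμ₀pos θ'
    | succ i ih =>
      intro ω θ'
      rw [hμt]
      have hZ : ∀ k : Fin K, 0 < ∑ θ'', f k θ'' (ξ k (i + 1) ω) * μt i ω θ'' :=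
        fun k => Finset.sum_pos (fun t _ => mul_pos (hfpos k t _) (ih ω t)) univ_nonempty
      have hN : ∀ t : Θ, 0 < μm t ^ π m * ∏ k ∈ univ.erase m,
          (f k t (ξ k (i + 1) ω) * μt i ω t /
            ∑ θ'', f k θ'' (ξ k (i + 1) ω) * μt i ω θ'') ^ π k := by
        intro t
        refine mul_pos (Real.rpow_pos_of_pos (hμmpos t) _) (Finset.prod_pos ?_)
        intro k _
        exact Real.rpow_pos_of_pos (div_pos (mul_pos (hfpos k t _) (ih ω t)) (hZ k)) _
      exact div_pos (hN θ') (Finset.sum_pos (fun t _ => hN t) univ_nonempty)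
  have hπm0 : 0 < π m := (hπ m).1
  have hπm1 : π m < 1 := (hπ m).2
  have hr : ∑ k ∈ univ.erase m, π k = 1 - π m := by
    rw [Finset.sum_erase_eq_sub (mem_univ m), hπsum]
  constructor
  · intro θ hθ
    -- the key pointwise recursion for the log-belief ratio
    have hlog : ∀ (i : ℕ) (ω : Ω),
        Real.log (μt (i + 1) ω θ₀ / μt (i + 1) ω θ) =
          π m * Real.log (μm θ₀ / μm θ) +
          ∑ k ∈ univ.erase m, π k *
            (Real.log (f k θ₀ (ξ k (i + 1) ω) / f k θ (ξ k (i + 1) ω)) +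
             Real.log (μt i ω θ₀ / μt i ω θ)) := by
      intro i ω
      set Z : Fin K → ℝ := fun k => ∑ θ'', f k θ'' (ξ k (i + 1) ω) * μt i ω θ'' with hZdef
      have hZ : ∀ k, 0 < Z k :=
        fun k => Finset.sum_pos (fun t _ => mul_pos (hfpos k t _) (hpos i ω t)) univ_nonempty
      set N : Θ → ℝ := fun t => μm t ^ π m * ∏ k ∈ univ.erase m,
          (f k t (ξ k (i + 1) ω) * μt i ω t / Z k) ^ π k with hNdef
      have hN : ∀ t, 0 < N t := by
        intro t
        refine mul_pos (Real.rpow_pos_of_pos (hμmpos t) _) (Finset.prod_pos ?_)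
        intro k _
        exact Real.rpow_pos_of_pos (div_pos (mul_pos (hfpos k t _) (hpos i ω t)) (hZ k)) _
      have hD : 0 < ∑ t, N t := Finset.sum_pos (fun t _ => hN t) univ_nonempty
      have hratio : μt (i + 1) ω θ₀ / μt (i + 1) ω θ = N θ₀ / N θ := by
        rw [hμt i ω θ₀, hμt i ω θ]
        exact div_div_div_cancel_right₀ hD.ne' _ _
      have hlogN : ∀ t, Real.log (N t) = π m * Real.log (μm t) +
          ∑ k ∈ univ.erase m, π k *
            (Real.log (f k t (ξ k (i + 1) ω)) + Real.log (μt i ω t) - Real.log (Z k)) := by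
        intro t
        rw [hNdef]
        rw [Real.log_mul (Real.rpow_pos_of_pos (hμmpos t) _).ne'
            (Finset.prod_pos (fun k _ => Real.rpow_pos_of_pos
              (div_pos (mul_pos (hfpos k t _) (hpos i ω t)) (hZ k)) _)).ne',
          Real.log_rpow (hμmpos t),
          Real.log_prod (fun k _ => (Real.rpow_pos_of_pos
            (div_pos (mul_pos (hfpos k t _) (hpos i ω t)) (hZ k)) _).ne')]
        congr 1
        refine Finset.sum_congr rfl fun k _ => ?_
        rw [Real.log_rpow (div_pos (mul_pos (hfpos k t _) (hpos i ω t)) (hZ k)),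
          Real.log_div (mul_pos (hfpos k t _) (hpos i ω t)).ne' (hZ k).ne',
          Real.log_mul (hfpos k t _).ne' (hpos i ω t).ne']
      have hRHS : ∑ k ∈ univ.erase m, π k *
            (Real.log (f k θ₀ (ξ k (i + 1) ω) / f k θ (ξ k (i + 1) ω)) +
             Real.log (μt i ω θ₀ / μt i ω θ)) =
          (∑ k ∈ univ.erase m, π k *
            (Real.log (f k θ₀ (ξ k (i + 1) ω)) + Real.log (μt i ω θ₀) - Real.log (Z k))) -
          ∑ k ∈ univ.erase m, π k *
            (Real.log (f k θ (ξ k (i + 1) ω)) + Real.log (μt i ω θ) - Real.log (Z k)) := by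
        rw [← Finset.sum_sub_distrib]
        refine Finset.sum_congr rfl fun k _ => ?_
        rw [Real.log_div (hfpos k θ₀ _).ne' (hfpos k θ _).ne',
          Real.log_div (hpos i ω θ₀).ne' (hpos i ω θ).ne']
        ring
      rw [hratio, Real.log_div (hN θ₀).ne' (hN θ).ne', hlogN θ₀, hlogN θ, hRHS,
        Real.log_div (hμmpos θ₀).ne' (hμmpos θ).ne']
      ring
    -- integrability of the log-belief ratio
    have hint : ∀ i : ℕ, Integrable (fun ω => Real.log (μt i ω θ₀ / μt i ω θ)) ℙ := by
      intro i
      induction i with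
      | zero =>
        have : (fun ω => Real.log (μt 0 ω θ₀ / μt 0 ω θ)) =
            fun _ => Real.log (μ₀ θ₀ / μ₀ θ) := by
          funext ω; rw [hinit]
        rw [this]; exact integrable_const _
      | succ i ih =>
        have heq : (fun ω => Real.log (μt (i + 1) ω θ₀ / μt (i + 1) ω θ)) =
            fun ω => π m * Real.log (μm θ₀ / μm θ) +
              ∑ k ∈ univ.erase m, π k *
                (Real.log (f k θ₀ (ξ k (i + 1) ω) / f k θ (ξ k (i + 1) ω)) +
                 Real.log (μt i ω θ₀ / μt i ω θ)) := funext (hlog i)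
        rw [heq]
        refine (integrable_const _).add (integrable_finset_sum _ fun k hk => ?_)
        exact (((hllrint k (Finset.ne_of_mem_erase hk) (i + 1) θ).add ih).const_mul _)
    -- expected value of the per-agent log-likelihood ratio
    have hgint_eq : ∀ k, k ≠ m → ∀ i : ℕ,
        ∫ ω, Real.log (f k θ₀ (ξ k i ω) / f k θ (ξ k i ω)) ∂ℙ = d k θ := by
      intro k hk i
      have hgmeas : Measurable (fun x => Real.log (f k θ₀ x / f k θ x)) :=
        Real.measurable_log.comp ((hfmeas k θ₀).div (hfmeas k θ))
      rw [← integral_map (hξmeas k i).aemeasurable hgmeas.aestronglyMeasurable,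
        hξlaw k hk i]
      have hden : (fun x => ENNReal.ofReal (f k θ₀ x)) =
          fun x => ((f k θ₀ x).toNNReal : ℝ≥0∞) := rfl
      rw [hden, integral_withDensity_eq_integral_smul (hfmeas k θ₀).real_toNNReal]
      rw [hd k θ]
      refine integral_congr_ae (Filter.Eventually.of_forall fun x => ?_)
      simp [NNReal.smul_def, Real.coe_toNNReal _ (hfpos k θ₀ x).le]
    -- recursion for the expected log-belief ratio
    have hrec : ∀ i : ℕ,
        ∫ ω, Real.log (μt (i + 1) ω θ₀ / μt (i + 1) ω θ) ∂ℙ =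
          π m * Real.log (μm θ₀ / μm θ) +
          ∑ k ∈ univ.erase m, π k *
            (d k θ + ∫ ω, Real.log (μt i ω θ₀ / μt i ω θ) ∂ℙ) := by
      intro i
      have hIk2 : ∀ k, k ≠ m → Integrable (fun ω =>
          Real.log (f k θ₀ (ξ k (i + 1) ω) / f k θ (ξ k (i + 1) ω)) +
          Real.log (μt i ω θ₀ / μt i ω θ)) ℙ := fun k hk =>
        (hllrint k hk (i + 1) θ).add (hint i)
      have hIk : ∀ k ∈ univ.erase m, Integrable (fun ω => π k *
          (Real.log (f k θ₀ (ξ k (i + 1) ω) / f k θ (ξ k (i + 1) ω)) +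
           Real.log (μt i ω θ₀ / μt i ω θ))) ℙ := fun k hk =>
        (hIk2 k (Finset.ne_of_mem_erase hk)).const_mul _
      rw [integral_congr_ae (Filter.Eventually.of_forall (hlog i))]
      rw [integral_add (integrable_const _) (integrable_finset_sum _ hIk),
        integral_const]
      simp only [probReal_univ, one_smul]
      congr 1
      rw [integral_finset_sum _ hIk]
      refine Finset.sum_congr rfl fun k hk => ?_
      rw [MeasureTheory.integral_const_mul,
        integral_add (hllrint k (Finset.ne_of_mem_erase hk) (i + 1) θ) (hint i),
        hgint_eq k (Finset.ne_of_mem_erase hk) (i + 1)]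
    -- closed form for the expected log-belief ratio
    set a : ℝ := Real.log (μm θ₀ / μm θ) with ha
    set b : ℝ := ∑ k ∈ univ.erase m, π k * d k θ with hb
    set c : ℝ := Real.log (μ₀ θ₀ / μ₀ θ) with hc
    set L : ℝ := (1 / π m) * b + a with hL
    have hform : ∀ i : ℕ, ∫ ω, Real.log (μt i ω θ₀ / μt i ω θ) ∂ℙ =
        L + (1 - π m) ^ i * (c - L) := by
      intro i
      induction i with
      | zero =>
        have : (fun ω => Real.log (μt 0 ω θ₀ / μt 0 ω θ)) = fun _ => c := by
          funext ω; rw [hinit]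
        rw [this, integral_const]
        simp [pow_zero]
      | succ i ih =>
        rw [hrec i, ih]
        have hexp : ∑ k ∈ univ.erase m, π k * (d k θ + (L + (1 - π m) ^ i * (c - L))) =
            b + (1 - π m) * (L + (1 - π m) ^ i * (c - L)) := by
          simp only [mul_add, Finset.sum_add_distrib, ← Finset.sum_mul, hr, ← hb]
        rw [hexp, hL]
        field_simp
        ring
    have hconv : Tendsto (fun i : ℕ => L + (1 - π m) ^ i * (c - L)) atTop (nhds L) := by
      have h1 : Tendsto (fun i : ℕ => (1 - π m) ^ i) atTop (nhds 0) :=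
        tendsto_pow_atTop_nhds_zero_of_lt_one (by linarith) (by linarith)
      have h2 : Tendsto (fun _ : ℕ => L) atTop (nhds L) := tendsto_const_nhds
      have := h2.add (h1.mul_const (c - L))
      simpa using this
    have : (fun i => ∫ ω, Real.log (μt i ω θ₀ / μt i ω θ) ∂ℙ) =
        fun i => L + (1 - π m) ^ i * (c - L) := funext hform
    rw [this]
    exact hconv
  · have hterm : ∀ θ ∈ univ.erase θ₀,
        Real.exp (-((1 / π m) * ∑ k ∈ univ.erase m, π k * d k θ +
          Real.log (μm θ₀ / μm θ))) =
        (μm θ / μm θ₀) * Real.exp (-(1 / π m) * ∑ k ∈ univ.erase m, π k * d k θ) := by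
      intro θ hθ
      rw [neg_add, Real.exp_add, ← Real.log_inv, inv_div,
        Real.exp_log (div_pos (hμmpos θ) (hμmpos θ₀)), neg_mul]
      ring
    rw [Finset.sum_congr rfl hterm]
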